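/- For any β ∈ (0,1), there is a constant c_β > 0 such that for all real a, b: ∫₀^∞ |cos(ar) − cos(br)| r^{-2} dr ≤ c_β (|a|+|b|)^{1−β} |a−b|^β. -/

import Mathlib

open MeasureTheory Real Set

theorem coslip_aux (x y : ℝ) : |Real.cos x - Real.cos y| ≤ |x - y| := by
  rw [Real.cos_sub_cos, abs_mul, abs_mul]
  have h1 := Real.abs_sin_le_one ((x+y)/2)
  have h2 : |Real.sin ((x-y)/2)| ≤ |x-y|/2 := by
    simpa [abs_div] using Real.abs_sin_le_abs (x := (x-y)/2)
  have h3 : |(-2:ℝ)| = 2 := by norm_num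
  rw [h3]
  nlinarith [abs_nonneg (Real.sin ((x-y)/2)), abs_nonneg (Real.sin ((x+y)/2))]

theorem cosquad_aux (x y : ℝ) : |Real.cos x - Real.cos y| ≤ |x + y| * |x - y| / 2 := by
  rw [Real.cos_sub_cos, abs_mul, abs_mul]
  have h1 : |Real.sin ((x+y)/2)| ≤ |x+y|/2 := by
    simpa [abs_div] using Real.abs_sin_le_abs (x := (x+y)/2)
  have h2 : |Real.sin ((x-y)/2)| ≤ |x-y|/2 := by
    simpa [abs_div] using Real.abs_sin_le_abs (x := (x-y)/2)
  have h3 : |(-2:ℝ)| = 2 := by norm_num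
  rw [h3]
  nlinarith [abs_nonneg (Real.sin ((x-y)/2)), abs_nonneg (Real.sin ((x+y)/2)),
    abs_nonneg (x+y), abs_nonneg (x-y)]

theorem min_le_rpow_aux {β : ℝ} (hβ0 : 0 < β) (hβ1 : β < 1) {x : ℝ} (hx : 0 ≤ x) :
    min 2 x ≤ 2 ^ (1-β) * x ^ β := by
  rcases hx.eq_or_lt with h0 | h0
  · simp [← h0, Real.zero_rpow hβ0.ne']
  rcases le_total x 2 with hx2 | hx2
  · rw [min_eq_right hx2]
    have hx1 : x = x ^ β * x ^ (1-β) := by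
      rw [← Real.rpow_add h0]; norm_num
    nth_rewrite 1 [hx1]
    have hle : x ^ (1-β) ≤ 2 ^ (1-β) :=
      Real.rpow_le_rpow h0.le hx2 (by linarith)
    calc x ^ β * x ^ (1-β) ≤ x ^ β * 2 ^ (1-β) := by
          exact mul_le_mul_of_nonneg_left hle (Real.rpow_nonneg h0.le β)
      _ = 2 ^ (1-β) * x ^ β := mul_comm _ _
  · rw [min_eq_left hx2]
    have h2 : (2:ℝ) = 2 ^ β * 2 ^ (1-β) := by
      rw [← Real.rpow_add (by norm_num)]; norm_num
    nth_rewrite 1 [h2]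
    have hle : (2:ℝ) ^ β ≤ x ^ β := Real.rpow_le_rpow (by norm_num) hx2 hβ0.le
    calc (2:ℝ) ^ β * 2 ^ (1-β) ≤ x ^ β * 2 ^ (1-β) := by
          exact mul_le_mul_of_nonneg_right hle (Real.rpow_nonneg (by norm_num) _)
      _ = 2 ^ (1-β) * x ^ β := mul_comm _ _

/-- Lemma 2.6(ii), cosine part: for `β ∈ (0,1)` there is `c_β > 0` with
`∫₀^∞ |cos(ar) − cos(br)| r^{-2} dr ≤ c_β (|a|+|b|)^{1−β} |a−b|^β`. -/
theorem stmt4 (β : ℝ) (hβ : β ∈ Set.Ioo (0:ℝ) 1) :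
    ∃ c > (0:ℝ), ∀ a b : ℝ,
      (∫ r in Set.Ioi (0:ℝ), |Real.cos (a * r) - Real.cos (b * r)| / r ^ (2:ℕ))
        ≤ c * (|a| + |b|) ^ (1 - β) * |a - b| ^ β := by
  obtain ⟨hβ0, hβ1⟩ := hβ
  have h1β : (0:ℝ) < 1 - β := by linarith
  refine ⟨1/2 + 2 ^ (1-β) / (1-β), by positivity, ?_⟩
  intro a b
  rcases eq_or_ne a b with rfl | hab
  · have : (∫ r in Set.Ioi (0:ℝ), |Real.cos (a * r) - Real.cos (a * r)| / r ^ (2:ℕ)) = 0 := by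
      simp
    rw [this, sub_self, abs_zero, Real.zero_rpow hβ0.ne', mul_zero]
  set D := |a - b| with hDdef
  set S := |a| + |b| with hSdef
  have hD : 0 < D := abs_pos.2 (sub_ne_zero.2 hab)
  have hDS : D ≤ S := abs_sub a b
  have hS : 0 < S := hD.trans_le hDS
  set r₀ : ℝ := S⁻¹ with hr₀def
  have hr₀ : 0 < r₀ := inv_pos.2 hS
  set f : ℝ → ℝ := fun r => |Real.cos (a * r) - Real.cos (b * r)| / r ^ (2:ℕ) with hfdef
  have hmeas : Measurable f := by fun_prop
  -- pointwise bounds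
  have claimA : ∀ r ∈ Ioc (0:ℝ) r₀, f r ≤ S * D / 2 := by
    intro r hr
    have hrpos : 0 < r := hr.1
    have hb : |Real.cos (a * r) - Real.cos (b * r)| ≤ S * D * r ^ (2:ℕ) / 2 := by
      have := cosquad_aux (a * r) (b * r)
      have he1 : |a * r + b * r| ≤ S * r := by
        calc |a * r + b * r| = |(a + b) * r| := by ring_nf
          _ = |a + b| * r := by rw [abs_mul, abs_of_pos hrpos]
          _ ≤ S * r := by
              exact mul_le_mul_of_nonneg_right (abs_add_le a b) hrpos.le
      have he2 : |a * r - b * r| = D * r := by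
        rw [show a * r - b * r = (a - b) * r by ring, abs_mul, abs_of_pos hrpos]
      calc |Real.cos (a * r) - Real.cos (b * r)| ≤ |a * r + b * r| * |a * r - b * r| / 2 := this
        _ ≤ (S * r) * (D * r) / 2 := by
            apply div_le_div_of_nonneg_right _ (by norm_num)
            exact mul_le_mul_of_nonneg_right he1 (by positivity) |>.trans_eq (by rw [he2]) |>.trans_eq rfl
        _ = S * D * r ^ (2:ℕ) / 2 := by ring
    rw [hfdef]
    rw [div_le_iff₀ (by positivity)]
    calc |Real.cos (a * r) - Real.cos (b * r)| ≤ S * D * r ^ (2:ℕ) / 2 := hb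
      _ = S * D / 2 * r ^ (2:ℕ) := by ring
  have claimB : ∀ r ∈ Ioi r₀, f r ≤ 2 ^ (1-β) * D ^ β * r ^ (β - 2) := by
    intro r hr
    have hrpos : 0 < r := hr₀.trans hr
    have hb2 : |Real.cos (a * r) - Real.cos (b * r)| ≤ 2 := by
      have c1 := Real.cos_le_one (a * r)
      have c2 := Real.neg_one_le_cos (a * r)
      have c3 := Real.cos_le_one (b * r)
      have c4 := Real.neg_one_le_cos (b * r)
      rw [abs_le]; constructor <;> linarith
    have hbl : |Real.cos (a * r) - Real.cos (b * r)| ≤ D * r := by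
      calc |Real.cos (a * r) - Real.cos (b * r)| ≤ |a * r - b * r| := coslip_aux _ _
        _ = D * r := by
            rw [show a * r - b * r = (a - b) * r by ring, abs_mul, abs_of_pos hrpos]
    have hmin : |Real.cos (a * r) - Real.cos (b * r)| ≤ 2 ^ (1-β) * (D * r) ^ β :=
      (le_min hb2 hbl).trans (min_le_rpow_aux hβ0 hβ1 (by positivity))
    rw [hfdef]
    rw [div_le_iff₀ (by positivity)]
    calc |Real.cos (a * r) - Real.cos (b * r)| ≤ 2 ^ (1-β) * (D * r) ^ β := hmin
      _ = 2 ^ (1-β) * D ^ β * r ^ (β - 2) * r ^ (2:ℕ) := by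
          have hr2 : (r:ℝ) ^ (2:ℕ) = r ^ (2:ℝ) := by
            rw [← Real.rpow_natCast r 2]; norm_num
          have key : r ^ (β - 2) * r ^ (2:ℕ) = r ^ β := by
            rw [hr2, ← Real.rpow_add hrpos]; norm_num
          rw [Real.mul_rpow hD.le hrpos.le, ← key]; ring
  -- integrability
  have int1 : IntegrableOn f (Ioc 0 r₀) := by
    apply Integrable.mono' (g := fun _ => S * D / 2)
      (integrableOn_const measure_Ioc_lt_top.ne)
      hmeas.aestronglyMeasurable.restrict
    filter_upwards [ae_restrict_mem measurableSet_Ioc] with r hr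
    simp only [hfdef, Real.norm_eq_abs]
    rw [abs_of_nonneg (by positivity)]
    exact claimA r hr
  have intg : IntegrableOn (fun r : ℝ => 2 ^ (1-β) * D ^ β * r ^ (β - 2)) (Ioi r₀) :=
    (integrableOn_Ioi_rpow_of_lt (by linarith) hr₀).const_mul _
  have int2 : IntegrableOn f (Ioi r₀) := by
    apply Integrable.mono' intg hmeas.aestronglyMeasurable.restrict
    filter_upwards [ae_restrict_mem measurableSet_Ioi] with r hr
    simp only [hfdef, Real.norm_eq_abs]
    rw [abs_of_nonneg (by positivity)]
    exact claimB r hr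
  -- split
  have hsplit : (∫ r in Ioi (0:ℝ), f r) = (∫ r in Ioc 0 r₀, f r) + ∫ r in Ioi r₀, f r := by
    rw [← setIntegral_union (Ioc_disjoint_Ioi le_rfl) measurableSet_Ioi int1 int2,
      Ioc_union_Ioi_eq_Ioi hr₀.le]
  have bound1 : (∫ r in Ioc (0:ℝ) r₀, f r) ≤ D / 2 := by
    calc (∫ r in Ioc (0:ℝ) r₀, f r) ≤ ∫ _ in Ioc (0:ℝ) r₀, S * D / 2 :=
        setIntegral_mono_on int1 (integrableOn_const measure_Ioc_lt_top.ne)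
          measurableSet_Ioc claimA
      _ = (volume (Ioc (0:ℝ) r₀)).toReal * (S * D / 2) := by
          rw [setIntegral_const]; rfl
      _ = r₀ * (S * D / 2) := by
          rw [Real.volume_Ioc, ENNReal.toReal_ofReal (by linarith)]; ring_nf
      _ = D / 2 := by
          rw [hr₀def]; field_simp
  have bound2 : (∫ r in Ioi r₀, f r) ≤ 2 ^ (1-β) / (1-β) * S ^ (1-β) * D ^ β := by
    calc (∫ r in Ioi r₀, f r) ≤ ∫ r in Ioi r₀, 2 ^ (1-β) * D ^ β * r ^ (β - 2) :=
        setIntegral_mono_on int2 intg measurableSet_Ioi claimB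
      _ = 2 ^ (1-β) * D ^ β * ∫ r in Ioi r₀, r ^ (β - 2) := by
          rw [MeasureTheory.integral_const_mul]
      _ = 2 ^ (1-β) * D ^ β * (-r₀ ^ (β - 2 + 1) / (β - 2 + 1)) := by
          rw [integral_Ioi_rpow_of_lt (by linarith) hr₀]
      _ = 2 ^ (1-β) / (1-β) * S ^ (1-β) * D ^ β := by
          have h1 : r₀ ^ (β - 2 + 1) = S ^ (1-β) := by
            rw [hr₀def, ← Real.rpow_neg_one S, ← Real.rpow_mul hS.le]
            congr 1; ring
          rw [h1, show β - 2 + 1 = -(1-β) by ring, div_neg, neg_div, neg_neg]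
          ring
  have hfin : D / 2 ≤ 1/2 * S ^ (1-β) * D ^ β := by
    have hDeq : D = D ^ β * D ^ (1-β) := by
      rw [← Real.rpow_add hD]; norm_num
    nth_rewrite 1 [hDeq]
    have hle : D ^ (1-β) ≤ S ^ (1-β) := Real.rpow_le_rpow hD.le hDS h1β.le
    calc D ^ β * D ^ (1-β) / 2 ≤ D ^ β * S ^ (1-β) / 2 := by
          apply div_le_div_of_nonneg_right _ (by norm_num)
          exact mul_le_mul_of_nonneg_left hle (Real.rpow_nonneg hD.le β)
      _ = 1/2 * S ^ (1-β) * D ^ β := by ring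
  calc (∫ r in Ioi (0:ℝ), f r) = (∫ r in Ioc 0 r₀, f r) + ∫ r in Ioi r₀, f r := hsplit
    _ ≤ D / 2 + 2 ^ (1-β) / (1-β) * S ^ (1-β) * D ^ β := add_le_add bound1 bound2
    _ ≤ 1/2 * S ^ (1-β) * D ^ β + 2 ^ (1-β) / (1-β) * S ^ (1-β) * D ^ β :=
        add_le_add_left hfin _
    _ = (1/2 + 2 ^ (1-β) / (1-β)) * S ^ (1-β) * D ^ β := by ring
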